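/- Let E be a hypergraph in which every edge has exactly 2 elements and each vertex has finite degree (belongs to finitely many edges). Then E has a minimal cover. -/

import Mathlib

/-- `C` is a cover of the hypergraph `E`. -/
def IsCover {α : Type*} (E C : Set (Set α)) : Prop :=
  C ⊆ E ∧ ⋃₀ C = ⋃₀ E

/-- `C` is a minimal cover of the hypergraph `E`. -/
def IsMinimalCover {α : Type*} (E C : Set (Set α)) : Prop :=
  IsCover E C ∧ ∀ D ⊆ C, IsCover E D → D = C

/-- `S` is a subhypergraph of `E`. -/
def IsSubhypergraph {α : Type*} (E S : Set (Set α)) : Prop :=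
  ∃ F ⊆ E, ∃ A ⊆ ⋃₀ F, S = (fun T => T ∩ A) '' F

/-- `S` has a maximal edge. -/
def HasMaximalEdge {α : Type*} (S : Set (Set α)) : Prop :=
  ∃ M ∈ S, ∀ T ∈ S, M ⊆ T → T = M

/-- `S` is isomorphic to the hypergraph ω, whose vertex set is ℕ and whose
edges are the initial segments `{0, …, n-1}` for `n : ℕ`. -/
def IsoToOmega {α : Type*} (S : Set (Set α)) : Prop :=
  ∃ f : ℕ → α, Function.Injective f ∧ Set.range f = ⋃₀ S ∧
    S = {T | ∃ n : ℕ, T = f '' Set.Iio n}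

theorem stmt_16 {α : Type*} (E : Set (Set α))
    (h2 : ∀ S ∈ E, S.ncard = 2)
    (hfin : ∀ v ∈ ⋃₀ E, {S ∈ E | v ∈ S}.Finite) :
    ∃ C, IsMinimalCover E C := by
  have key : ∀ c ⊆ {C | IsCover E C}, IsChain (· ⊆ ·) c →
      ∃ lb ∈ {C | IsCover E C}, ∀ s ∈ c, lb ⊆ s := by
    intro c hcS hchain
    rcases c.eq_empty_or_nonempty with rfl | hne
    · exact ⟨E, ⟨subset_rfl, rfl⟩, by simp⟩
    obtain ⟨c0, hc0⟩ := hne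
    have hc0cov : IsCover E c0 := hcS hc0
    refine ⟨⋂₀ c, ⟨?_, ?_⟩, fun s hs => Set.sInter_subset_of_mem hs⟩
    · exact (Set.sInter_subset_of_mem hc0).trans hc0cov.1
    · apply Set.Subset.antisymm
      · exact Set.sUnion_subset_sUnion ((Set.sInter_subset_of_mem hc0).trans hc0cov.1)
      · intro v hv
        -- claim: some edge containing v lies in every member of the chain
        by_contra hcon
        set F : Set (Set α) := {S ∈ E | v ∈ S} with hF
        have hmem : ∀ S ∈ F, ∃ C ∈ c, S ∉ C := by
          intro S hS
          by_contra h
          push_neg at h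
          exact hcon ⟨S, fun C hC => h C hC, hS.2⟩
        choose g hg1 hg2 using hmem
        have hFfin : F.Finite := hfin v hv
        set G : Set (Set (Set α)) := {T | ∃ S : Set α, ∃ hS : S ∈ F, T = g S hS} with hG
        have hGfin : G.Finite := by
          have : G ⊆ (fun p : F => g p.1 p.2) '' Set.univ := by
            rintro T ⟨S, hS, rfl⟩
            exact ⟨⟨S, hS⟩, trivial, rfl⟩
          exact (Set.Finite.image _ (Set.finite_univ_iff.mpr hFfin.to_subtype)).subset this
        have hGne : G.Nonempty := by
          obtain ⟨S0, hS0v⟩ := hv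
          exact ⟨g S0 ⟨hS0v.1, hS0v.2⟩, S0, ⟨hS0v.1, hS0v.2⟩, rfl⟩
        obtain ⟨m, hmG, hmmin⟩ : ∃ a ∈ G, ∀ a' ∈ G, id a' ≤ id a → id a = id a' := by
          obtain ⟨m, hm⟩ := Set.Finite.exists_minimal hGfin hGne
          exact ⟨m, hm.prop, fun a' ha' h => le_antisymm (hm.le_of_le ha' h) h⟩
        have hGc : G ⊆ c := by rintro T ⟨S, hS, rfl⟩; exact hg1 S hS
        have hmc : m ∈ c := hGc hmG
        have hmcov : IsCover E m := hcS hmc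
        have hvm : v ∈ ⋃₀ m := hmcov.2.symm ▸ hv
        obtain ⟨S, hSm, hvS⟩ := hvm
        have hSF : S ∈ F := ⟨hmcov.1 hSm, hvS⟩
        have hgSm : m ⊆ g S hSF := by
          rcases hchain.total hmc (hg1 S hSF) with h | h
          · exact h
          · exact (hmmin (g S hSF) ⟨S, hSF, rfl⟩ h).le
        exact hg2 S hSF (hgSm hSm)

  obtain ⟨C, hCmin⟩ := zorn_superset {C | IsCover E C} key
  exact ⟨C, hCmin.prop, fun D hD hDc => le_antisymm hD (hCmin.le_of_le hDc hD)⟩
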